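/- Suppose initially all doors are equally likely to hide the car (P(Car = i) = 1/3 for every door i), Car is independent of P1, and the host is unbiased: for every door i with P({Car = i} ∩ {P1 = i}) > 0 and every door j ≠ i, P({Goat = j} | {Car = i} ∩ {P1 = i}) = 1/2. Then for all doors i ≠ j with P({P1 = i} ∩ {Goat = j}) > 0, the conditional probability that switching gives the car is exactly 2/3: P({Switch = Car} | {P1 = i} ∩ {Goat = j}) = 2/3. -/

import Mathlib

open MeasureTheory
open scoped ENNReal

/-- For two distinct doors `a b : Fin 3`, `switchDoor a b = -(a + b)` is the unique
door distinct from both `a` and `b` (since `0 + 1 + 2 = 0` in `Fin 3`). -/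
def switchDoor (a b : Fin 3) : Fin 3 := -(a + b)

lemma fin3_facts : ∀ i j : Fin 3, i ≠ j →
    switchDoor i j ≠ i ∧ switchDoor i j ≠ j ∧
    (∀ c : Fin 3, c ≠ i → c ≠ switchDoor i j → c = j) ∧
    (∀ c : Fin 3, c ≠ j → c ≠ switchDoor i j → c = i) := by decide

/-- If all doors are equally likely to hide the car, the car's location is
independent of the player's initial choice, and the host is unbiased (opens either
available door with conditional probability `1/2` when the player's initial choice
hides the car), then given any initially chosen door `i` and opened door `j ≠ i` of
positive probability, the conditional probability that switching gives the car is
exactly `2/3`. -/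
theorem monty_hall_conditional_two_thirds
    {Ω : Type*} [MeasurableSpace Ω] (P : Measure Ω) [IsProbabilityMeasure P]
    (Car P1 Goat : Ω → Fin 3)
    (hmCar : Measurable Car) (hmP1 : Measurable P1) (hmGoat : Measurable Goat)
    (hGoatCar : ∀ ω, Goat ω ≠ Car ω) (hGoatP1 : ∀ ω, Goat ω ≠ P1 ω)
    (hUnif : ∀ i : Fin 3, P {ω | Car ω = i} = 1 / 3)
    (hIndep : ProbabilityTheory.IndepFun Car P1 P)
    (hHost : ∀ i : Fin 3, 0 < P ({ω | Car ω = i} ∩ {ω | P1 ω = i}) →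
      ∀ j : Fin 3, j ≠ i →
        P ({ω | Goat ω = j} ∩ ({ω | Car ω = i} ∩ {ω | P1 ω = i})) /
            P ({ω | Car ω = i} ∩ {ω | P1 ω = i}) = 1 / 2) :
    ∀ i j : Fin 3, i ≠ j → 0 < P ({ω | P1 ω = i} ∩ {ω | Goat ω = j}) →
      P ({ω | switchDoor (P1 ω) (Goat ω) = Car ω} ∩ ({ω | P1 ω = i} ∩ {ω | Goat ω = j})) /
          P ({ω | P1 ω = i} ∩ {ω | Goat ω = j}) = 2 / 3 := by
  intro i j hij hpos
  obtain ⟨hki, hkj, huniq_j, huniq_i⟩ := fin3_facts i j hij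
  set k := switchDoor i j with hk
  set B : Set Ω := {ω | P1 ω = i} ∩ {ω | Goat ω = j} with hB
  set p := P (P1 ⁻¹' {i}) with hp
  -- p is nonzero and finite
  have hpt : p ≠ ⊤ := measure_ne_top P _
  have hp0 : p ≠ 0 := by
    intro h
    have hBsub : B ⊆ P1 ⁻¹' {i} := fun ω hω => hω.1
    have : P B = 0 := measure_mono_null hBsub h
    rw [this] at hpos; exact lt_irrefl 0 hpos
  -- the switch event intersected with B is the event Car = k
  have hAB : {ω | switchDoor (P1 ω) (Goat ω) = Car ω} ∩ B = {ω | Car ω = k} ∩ B := by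
    ext ω
    simp only [hB, Set.mem_inter_iff, Set.mem_setOf_eq]
    constructor
    · rintro ⟨h1, h2, h3⟩
      exact ⟨by rw [← h1, h2, h3], h2, h3⟩
    · rintro ⟨h1, h2, h3⟩
      exact ⟨by rw [h2, h3, ← hk, ← h1], h2, h3⟩
  -- {Car = k} ∩ B is just {Car = k} ∩ {P1 = i}
  have hCkB : {ω | Car ω = k} ∩ B = Car ⁻¹' {k} ∩ P1 ⁻¹' {i} := by
    ext ω
    simp only [hB, Set.mem_inter_iff, Set.mem_setOf_eq, Set.mem_preimage,
      Set.mem_singleton_iff]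
    constructor
    · rintro ⟨h1, h2, _⟩; exact ⟨h1, h2⟩
    · rintro ⟨h1, h2⟩
      refine ⟨h1, h2, huniq_j (Goat ω) ?_ ?_⟩
      · exact fun h => hGoatP1 ω (h.trans h2.symm)
      · exact fun h => hGoatCar ω (h.trans h1.symm)
  -- independence computations
  have hCar_pre : ∀ c : Fin 3, Car ⁻¹' {c} = {ω | Car ω = c} := fun c => rfl
  have hIndepEq : ∀ c : Fin 3, P (Car ⁻¹' {c} ∩ P1 ⁻¹' {i}) = 1 / 3 * p := by
    intro c
    rw [hIndep.measure_inter_preimage_eq_mul {c} {i} (measurableSet_singleton c)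
      (measurableSet_singleton i), hCar_pre, hUnif c]
  have hPk : P ({ω | Car ω = k} ∩ B) = 1 / 3 * p := by rw [hCkB, hIndepEq]
  -- host behaviour: the probability of {Car = i} ∩ B
  have hCiPi : P ({ω | Car ω = i} ∩ {ω | P1 ω = i}) = 1 / 3 * p := by
    rw [show {ω | Car ω = i} ∩ {ω | P1 ω = i} = Car ⁻¹' {i} ∩ P1 ⁻¹' {i} from rfl,
      hIndepEq]
  have hCiPi_pos : 0 < P ({ω | Car ω = i} ∩ {ω | P1 ω = i}) := by
    rw [hCiPi]
    exact ENNReal.mul_pos (by simp) hp0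
  have hHostEq := hHost i hCiPi_pos j hij.symm
  have hGoatSet : {ω | Goat ω = j} ∩ ({ω | Car ω = i} ∩ {ω | P1 ω = i}) =
      {ω | Car ω = i} ∩ B := by
    ext ω
    simp only [hB, Set.mem_inter_iff, Set.mem_setOf_eq]
    tauto
  have hCiPi_ne0 : P ({ω | Car ω = i} ∩ {ω | P1 ω = i}) ≠ 0 := hCiPi_pos.ne'
  have hCiPi_net : P ({ω | Car ω = i} ∩ {ω | P1 ω = i}) ≠ ⊤ := measure_ne_top P _
  have hPi : P ({ω | Car ω = i} ∩ B) = 1 / 2 * (1 / 3 * p) := by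
    have := congrArg (· * P ({ω | Car ω = i} ∩ {ω | P1 ω = i})) hHostEq
    rw [ENNReal.div_mul_cancel hCiPi_ne0 hCiPi_net] at this
    rw [← hGoatSet, this, hCiPi]
  -- decompose B
  have hBdecomp : B = ({ω | Car ω = i} ∩ B) ∪ ({ω | Car ω = k} ∩ B) := by
    ext ω
    simp only [Set.mem_union, Set.mem_inter_iff, Set.mem_setOf_eq]
    constructor
    · intro hω
      by_cases hc : Car ω = k
      · exact Or.inr ⟨hc, hω⟩
      · refine Or.inl ⟨huniq_i (Car ω) ?_ hc, hω⟩
        exact fun h => hGoatCar ω (hω.2.trans h.symm)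
    · rintro (⟨_, h⟩ | ⟨_, h⟩) <;> exact h
  have hdisj : Disjoint ({ω | Car ω = i} ∩ B) ({ω | Car ω = k} ∩ B) := by
    refine Set.disjoint_left.2 ?_
    rintro ω ⟨h1, _⟩ ⟨h2, _⟩
    simp only [Set.mem_setOf_eq] at h1 h2
    exact hki (h1 ▸ h2.symm)
  have hmeas : MeasurableSet ({ω | Car ω = k} ∩ B) := by
    refine (hmCar (measurableSet_singleton k)).inter ?_
    exact (hmP1 (measurableSet_singleton i)).inter (hmGoat (measurableSet_singleton j))
  have hPB : P B = 1 / 2 * (1 / 3 * p) + 1 / 3 * p := by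
    rw [hBdecomp, measure_union hdisj hmeas, hPi, hPk]
  -- constant arithmetic in ℝ≥0∞
  have hc1 : (1 / 2 * (1 / 3) + 1 / 3 : ℝ≥0∞) = 1 / 2 := by
    rw [← ENNReal.toReal_eq_toReal_iff' (by simp [ENNReal.add_eq_top, ENNReal.mul_eq_top])
      (by simp)]
    rw [ENNReal.toReal_add (by simp [ENNReal.mul_eq_top]) (by simp)]
    simp [ENNReal.toReal_div]
    norm_num
  have hPB' : P B = 1 / 2 * p := by
    rw [hPB, show (1 : ℝ≥0∞) / 2 * (1 / 3 * p) + 1 / 3 * p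
      = (1 / 2 * (1 / 3) + 1 / 3) * p by ring, hc1]
  rw [hAB, hPk, hPB', mul_comm ((1 : ℝ≥0∞) / 3) p, mul_comm ((1 : ℝ≥0∞) / 2) p,
    ENNReal.mul_div_mul_left _ _ hp0 hpt]
  rw [← ENNReal.toReal_eq_toReal_iff' (by simp [ENNReal.div_eq_top]) (by simp [ENNReal.div_eq_top])]
  simp [ENNReal.toReal_div]
  norm_num
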